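/- If φ: G → B is a node-surjective fibration where B is strongly connected and nonnegative, then the lifting e^φ of the Perron (dominant) left eigenvector e of B is the Perron left eigenvector of G, and G and B have the same spectral radius. -/

import Mathlib

/-- A directed multigraph: a set of nodes, a set of arcs, and source/target maps. -/
structure Multigraph (N A : Type*) where
  src : A → N
  tgt : A → N

/-- The adjacency matrix of a multigraph (over `ℝ`): entry `(x, y)` counts the arcs
from `x` to `y` with multiplicity. -/
noncomputable def adjMat {N A : Type*} [Fintype A] [DecidableEq N]
    (G : Multigraph N A) : Matrix N N ℝ :=
  fun x y => ((Finset.univ.filter fun a => G.src a = x ∧ G.tgt a = y).card : ℝ)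

/-- A graph fibration `φ : G → B`: a morphism of multigraphs (commuting with source
and target maps) such that every arc of `B` lifts uniquely at each node of `G` in
the fiber over its target. -/
structure Fibration {N A N' A' : Type*} (G : Multigraph N A) (B : Multigraph N' A') where
  nodeMap : N → N'
  arcMap : A → A'
  src_comm : ∀ a : A, B.src (arcMap a) = nodeMap (G.src a)
  tgt_comm : ∀ a : A, B.tgt (arcMap a) = nodeMap (G.tgt a)
  lift : ∀ (a : A') (x : N), nodeMap x = B.tgt a →
    ∃! (la : A), arcMap la = a ∧ G.tgt la = x

/-- The spectral radius of a real square matrix: the supremum of the absolute values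
of its (complex) eigenvalues. -/
noncomputable def specRad {n : Type*} [Fintype n] [DecidableEq n]
    (M : Matrix n n ℝ) : ℝ :=
  sSup ((fun z : ℂ => ‖z‖) '' spectrum ℂ (M.map (algebraMap ℝ ℂ)))

section Aux
open Matrix Finset
-- spectral lemma

lemma specRad_eq_of_pos_left_eig {n : Type*} [Fintype n] [DecidableEq n] [Nonempty n]
    (M : Matrix n n ℝ) (hM : ∀ i j, 0 ≤ M i j) (v : n → ℝ) (hv : ∀ i, 0 < v i)
    (lam : ℝ) (hlam : 0 ≤ lam) (h : Matrix.vecMul v M = lam • v) :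
    sSup ((fun z : ℂ => ‖z‖) '' spectrum ℂ (M.map (algebraMap ℝ ℂ))) = lam := by
  set Mc := M.map (algebraMap ℝ ℂ) with hMc
  have hMc' : ∀ i j, Mc i j = ((M i j : ℝ) : ℂ) := fun i j => rfl
  apply IsGreatest.csSup_eq
  constructor
  · -- lam ∈ image
    refine ⟨(lam : ℂ), ?_, by simp [hlam, abs_of_nonneg]⟩
    rw [spectrum.mem_iff]
    intro hunit
    rw [Matrix.isUnit_iff_isUnit_det, isUnit_iff_ne_zero] at hunit
    apply hunit
    rw [← Matrix.exists_vecMul_eq_zero_iff]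
    refine ⟨fun j => ((v j : ℝ) : ℂ), ?_, ?_⟩
    · intro h0
      have := congrFun h0 (Classical.arbitrary n)
      simp only [Pi.zero_apply, Complex.ofReal_eq_zero] at this
      exact (hv _).ne' this
    · funext j
      have hj := congrFun h j
      simp only [Matrix.vecMul, dotProduct, Pi.smul_apply, smul_eq_mul] at hj ⊢
      rw [Algebra.algebraMap_eq_smul_one]
      simp only [Matrix.sub_apply, Matrix.smul_apply, Matrix.one_apply, smul_eq_mul,
        mul_ite, mul_one, mul_zero, hMc']
      push_cast
      rw [Pi.zero_apply]
      push_cast at hj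
      calc (∑ x, (v x : ℂ) * (((if x = j then (lam:ℂ) else 0)) - (M x j : ℂ)))
          = (∑ x, ((if x = j then (v x : ℂ) * lam else 0) - (v x : ℂ) * M x j)) := by
            apply Finset.sum_congr rfl; intro x _; by_cases hx : x = j <;> simp [hx, mul_sub]
        _ = (v j : ℂ) * lam - ∑ x, (v x : ℂ) * M x j := by
            rw [Finset.sum_sub_distrib, Finset.sum_ite_eq' Finset.univ j]
            simp
        _ = 0 := by
            rw [sub_eq_zero]; norm_cast; linarith [hj]
  · -- upper bound
    rintro x ⟨μ, hμ, rfl⟩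
    rw [spectrum.mem_iff] at hμ
    have hdet : ((algebraMap ℂ (Matrix n n ℂ)) μ - Mc).det = 0 := by
      by_contra hne
      exact hμ ((Matrix.isUnit_iff_isUnit_det _).mpr (isUnit_iff_ne_zero.mpr hne))
    obtain ⟨w, hw0, hw⟩ := Matrix.exists_mulVec_eq_zero_iff.mpr hdet
    have hw' : Mc *ᵥ w = μ • w := by
      have := hw
      rw [Matrix.sub_mulVec, sub_eq_zero, Algebra.algebraMap_eq_smul_one,
        Matrix.smul_mulVec, Matrix.one_mulVec] at this
      exact this.symm
    set u : n → ℝ := fun j => ‖w j‖ with hu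
    have hentry : ∀ i, ‖μ‖ * u i ≤ ∑ j, M i j * u j := by
      intro i
      have h1 : μ * w i = ∑ j, Mc i j * w j := by
        have := congrFun hw' i
        simpa [Matrix.mulVec, dotProduct] using this.symm
      calc ‖μ‖ * u i = ‖μ * w i‖ := by simp [hu]
        _ = ‖∑ j, Mc i j * w j‖ := by rw [h1]
        _ ≤ ∑ j, ‖Mc i j * w j‖ := norm_sum_le _ _
        _ = ∑ j, M i j * u j := by
            apply Finset.sum_congr rfl; intro j _
            rw [norm_mul, hMc', Complex.norm_real, Real.norm_eq_abs, abs_of_nonneg (hM i j)]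
    have hvu : 0 < ∑ j, v j * u j := by
      obtain ⟨j0, hj0⟩ : ∃ j, w j ≠ 0 := by
        by_contra hall; push_neg at hall; exact hw0 (funext fun j => hall j)
      apply Finset.sum_pos' (fun j _ => mul_nonneg (hv j).le (norm_nonneg _))
      exact ⟨j0, Finset.mem_univ _, mul_pos (hv j0) (by simpa [hu] using hj0)⟩
    have key : ‖μ‖ * (∑ j, v j * u j) ≤ lam * (∑ j, v j * u j) := by
      calc ‖μ‖ * (∑ j, v j * u j) = ∑ j, v j * (‖μ‖ * u j) := by
            rw [Finset.mul_sum]; apply Finset.sum_congr rfl; intro j _; ring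
        _ ≤ ∑ j, v j * (∑ k, M j k * u k) := by
            apply Finset.sum_le_sum; intro j _
            exact mul_le_mul_of_nonneg_left (hentry j) (hv j).le
        _ = ∑ k, (∑ j, v j * M j k) * u k := by
            simp_rw [Finset.mul_sum, Finset.sum_mul]
            rw [Finset.sum_comm]
            apply Finset.sum_congr rfl; intro j _
            apply Finset.sum_congr rfl; intro k _; ring
        _ = ∑ k, (lam * v k) * u k := by
            apply Finset.sum_congr rfl; intro k _
            have := congrFun h k
            simp only [Matrix.vecMul, dotProduct, Pi.smul_apply, smul_eq_mul] at this
            rw [this]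
        _ = lam * (∑ j, v j * u j) := by rw [Finset.mul_sum]; apply Finset.sum_congr rfl; intro j _; ring
    exact le_of_mul_le_mul_right key hvu


lemma specRad_isEmpty {n : Type*} [Fintype n] [DecidableEq n] [IsEmpty n]
    (M : Matrix n n ℝ) : specRad M = 0 := by
  haveI : Subsingleton (Matrix n n ℂ) := ⟨fun a b => by ext i; exact (IsEmpty.false i).elim⟩
  have hspec : spectrum ℂ (M.map (algebraMap ℝ ℂ)) = ∅ := by
    ext z
    simp [spectrum.mem_iff, isUnit_of_subsingleton]
  rw [specRad, hspec]
  simp [Real.sSup_empty]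


lemma vecMul_adjMat {N A : Type*} [Fintype A] [Fintype N] [DecidableEq N]
    (G : Multigraph N A) (v : N → ℝ) (y : N) :
    Matrix.vecMul v (adjMat G) y
      = ∑ a ∈ Finset.univ.filter (fun a => G.tgt a = y), v (G.src a) := by
  simp only [Matrix.vecMul, dotProduct, adjMat, Finset.card_filter]
  push_cast
  simp only [Finset.mul_sum, mul_ite, mul_one, mul_zero]
  rw [Finset.sum_comm, Finset.sum_filter]
  apply Finset.sum_congr rfl
  intro a _
  by_cases h : G.tgt a = y
  · simp only [h, and_true]
    rw [Finset.sum_ite_eq Finset.univ (G.src a) v]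
    simp
  · simp [h]

lemma lift_vecMul {N A N' A' : Type*}
    [Fintype N] [Fintype N'] [Fintype A] [Fintype A'] [DecidableEq N] [DecidableEq N']
    (G : Multigraph N A) (B : Multigraph N' A') (φ : Fibration G B) (e : N' → ℝ) (y : N) :
    Matrix.vecMul (e ∘ φ.nodeMap) (adjMat G) y
      = Matrix.vecMul e (adjMat B) (φ.nodeMap y) := by
  rw [vecMul_adjMat, vecMul_adjMat]
  apply Finset.sum_bij (fun a _ => φ.arcMap a)
  · intro a ha
    simp only [Finset.mem_filter, Finset.mem_univ, true_and] at ha ⊢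
    rw [φ.tgt_comm, ha]
  · intro a ha b hb hab
    simp only [Finset.mem_filter, Finset.mem_univ, true_and] at ha hb
    obtain ⟨la, -, huniq⟩ := φ.lift (φ.arcMap a) y (by rw [φ.tgt_comm, ha])
    rw [huniq a ⟨rfl, ha⟩, huniq b ⟨hab.symm, hb⟩]
  · intro a' ha'
    simp only [Finset.mem_filter, Finset.mem_univ, true_and] at ha'
    obtain ⟨la, ⟨h1, h2⟩, -⟩ := φ.lift a' y ha'.symm
    exact ⟨la, by simp [h2], h1⟩
  · intro a ha
    simp [φ.src_comm]

end Aux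

/-- If `φ : G → B` is a node-surjective fibration with `B` strongly connected (all
adjacency-matrix entries are nonnegative by construction), then the lifting `e^φ`
of the Perron (dominant, strictly positive) left eigenvector `e` of `B` is a
strictly positive left eigenvector of `G` for the same eigenvalue, it is the Perron
eigenvector of `G`, and `G` and `B` have the same spectral radius. -/

theorem fibration_perron {N A N' A' : Type*}
    [Fintype N] [Fintype N'] [Fintype A] [Fintype A'] [DecidableEq N] [DecidableEq N']
    (G : Multigraph N A) (B : Multigraph N' A') (φ : Fibration G B)
    (hsurj : Function.Surjective φ.nodeMap)
    (hconn : ∀ x y : N', Relation.ReflTransGen (fun u v => 0 < adjMat B u v) x y)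
    (e : N' → ℝ) (hpos : ∀ i, 0 < e i)
    (heig : Matrix.vecMul e (adjMat B) = specRad (adjMat B) • e) :
    specRad (adjMat G) = specRad (adjMat B) ∧
    Matrix.vecMul (e ∘ φ.nodeMap) (adjMat G) = specRad (adjMat G) • (e ∘ φ.nodeMap) ∧
    (∀ i : N, 0 < (e ∘ φ.nodeMap) i) := by

  by_cases hN : Nonempty N
  · obtain ⟨x0⟩ := hN
    set lam := specRad (adjMat B) with hlamdef
    haveI : Nonempty N := ⟨x0⟩
    haveI : Nonempty N' := ⟨φ.nodeMap x0⟩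
    have hlam : 0 ≤ lam := by
      have hi := congrFun heig (φ.nodeMap x0)
      simp only [Matrix.vecMul, dotProduct, Pi.smul_apply, smul_eq_mul] at hi
      have hnn : 0 ≤ ∑ j, e j * adjMat B j (φ.nodeMap x0) := by
        apply Finset.sum_nonneg
        intro j _
        exact mul_nonneg (hpos j).le (by simp [adjMat])
      rw [hi] at hnn
      exact (mul_nonneg_iff_of_pos_right (hpos _)).mp hnn
    have heigG : Matrix.vecMul (e ∘ φ.nodeMap) (adjMat G) = lam • (e ∘ φ.nodeMap) := by
      funext y
      rw [lift_vecMul G B φ e y, heig]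
      simp
    have hG : specRad (adjMat G) = lam := by
      rw [specRad]
      exact specRad_eq_of_pos_left_eig (adjMat G) (fun i j => by simp [adjMat])
        (e ∘ φ.nodeMap) (fun i => hpos _) lam hlam heigG
    refine ⟨hG, by rw [hG]; exact heigG, fun i => hpos _⟩
  · haveI hNe : IsEmpty N := not_nonempty_iff.mp hN
    haveI : IsEmpty N' := ⟨fun y => (hsurj y).elim fun n _ => IsEmpty.false n⟩
    refine ⟨by rw [specRad_isEmpty, specRad_isEmpty], ?_, fun i => (IsEmpty.false i).elim⟩
    funext i
    exact (IsEmpty.false i).elim
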